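/- If α : I → X is a path and there exists t ∈ [0,1] such that the restricted path α_{[t,1]} (the restriction of α to [t,1] reparametrized linearly to I) is well-targeted, then α is well-targeted. -/
import Mathlib

open unitInterval Topology

/-- A path `α` is well-targeted if every neighborhood `U` of `α` in the space of paths
starting at `α 0` admits an open neighborhood `V` of `α 1` each of whose points is the
endpoint of some path in `U`. -/
def IsWellTargeted {X : Type*} [TopologicalSpace X] (α : C(I, X)) : Prop :=
  ∀ U : Set {β : C(I, X) // β 0 = α 0}, IsOpen U →
    (⟨α, rfl⟩ : {β : C(I, X) // β 0 = α 0}) ∈ U →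
    ∃ V : Set X, IsOpen V ∧ α 1 ∈ V ∧ ∀ b ∈ V, ∃ β ∈ U, β.1 1 = b

/-- A path `α` is well-ended if every neighborhood `U` of `α` in `𝒫X` admits open
neighborhoods `V₀, V₁` of `α 0, α 1` such that every pair `(a, b) ∈ V₀ × V₁` is joined
by a path in `U`. -/
def IsWellEnded {X : Type*} [TopologicalSpace X] (α : C(I, X)) : Prop :=
  ∀ U : Set C(I, X), IsOpen U → α ∈ U →
    ∃ V₀ V₁ : Set X, IsOpen V₀ ∧ IsOpen V₁ ∧ α 0 ∈ V₀ ∧ α 1 ∈ V₁ ∧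
      ∀ a ∈ V₀, ∀ b ∈ V₁, ∃ β ∈ U, β 0 = a ∧ β 1 = b

/-- A space is wep-connected if every pair of its points is joined by a well-ended path. -/
def WepConnected (X : Type*) [TopologicalSpace X] : Prop :=
  ∀ x y : X, ∃ α : C(I, X), α 0 = x ∧ α 1 = y ∧ IsWellEnded α

/-- The restriction `α_{[t,1]}` of a path `α` to `[t,1]`, reparametrized linearly to `I`
(`s ↦ α (t + s(1−t))`; for `t = 1` it is the constant path at `α 1`). -/
def restrictCM {X : Type*} [TopologicalSpace X] (α : C(I, X)) (t : I) : C(I, X) :=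
  α.comp
    ⟨fun s => ⟨(t : ℝ) + s * (1 - t),
      ⟨add_nonneg t.2.1 (mul_nonneg s.2.1 (by linarith [t.2.2])),
        by nlinarith [s.2.2, t.2.2, s.2.1, t.2.1]⟩⟩,
      by fun_prop⟩

/-! ### Auxiliary material -/


noncomputable def prI : ℝ → I := Set.projIcc 0 1 zero_le_one

lemma prI_coe (s : I) : prI (s : ℝ) = s := Set.projIcc_val zero_le_one s

lemma prI_of_mem {r : ℝ} (hr : r ∈ Set.Icc (0:ℝ) 1) : (prI r : ℝ) = r := by
  rw [prI, Set.projIcc_of_mem _ hr]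

lemma I_coe_zero : ((0:I) : ℝ) = 0 := rfl

lemma I_coe_one : ((1:I) : ℝ) = 1 := rfl

lemma prI_zero : prI 0 = 0 := by rw [← I_coe_zero, prI_coe]

lemma prI_one : prI 1 = 1 := by rw [← I_coe_one, prI_coe]

lemma prI_eq {r : ℝ} {s : I} (h : r = (s : ℝ)) : prI r = s := by rw [h, prI_coe]

lemma continuous_prI : Continuous prI := continuous_projIcc

lemma restrictCM_apply {X : Type*} [TopologicalSpace X] (α : C(I, X)) (t s : I) :
    restrictCM α t s = α (prI ((t : ℝ) + s * (1 - t))) := by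
  have hm : (t : ℝ) + s * (1 - t) ∈ Set.Icc (0:ℝ) 1 :=
    ⟨add_nonneg t.2.1 (mul_nonneg s.2.1 (by linarith [t.2.2])),
      by nlinarith [s.2.2, t.2.2, s.2.1, t.2.1]⟩
  show α _ = α _
  congr 1
  exact Subtype.ext (prI_of_mem hm).symm

lemma restrictCM_zero {X : Type*} [TopologicalSpace X] (α : C(I, X)) (t : I) :
    restrictCM α t 0 = α t := by
  rw [restrictCM_apply]
  congr 1
  exact prI_eq (by rw [I_coe_zero]; ring)

lemma restrictCM_one {X : Type*} [TopologicalSpace X] (α : C(I, X)) (t : I) :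
    restrictCM α t 1 = α 1 := by
  rw [restrictCM_apply]
  congr 1
  exact prI_eq (by rw [I_coe_one]; ring)

/-- The transfer lemma. -/
lemma isWellTargeted_of_map {X : Type*} [TopologicalSpace X] (α δ : C(I, X))
    (hδ : IsWellTargeted δ) (hδ1 : δ 1 = α 1)
    (hF : ∀ U : Set {β : C(I, X) // β 0 = α 0}, IsOpen U →
      (⟨α, rfl⟩ : {β : C(I, X) // β 0 = α 0}) ∈ U →
      ∃ F : C({β : C(I, X) // β 0 = δ 0}, {β : C(I, X) // β 0 = α 0}),
        F ⟨δ, rfl⟩ ∈ U ∧ ∀ β, (F β).1 1 = β.1 1) :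
    IsWellTargeted α := by
  intro U hU hmem
  obtain ⟨F, hF0, hFe⟩ := hF U hU hmem
  obtain ⟨V, hVo, hVm, hV⟩ := hδ (F ⁻¹' U) (hU.preimage F.continuous) hF0
  refine ⟨V, hVo, hδ1 ▸ hVm, fun b hb => ?_⟩
  obtain ⟨β, hβU, hβ1⟩ := hV b hb
  exact ⟨F β, hβU, (hFe β).trans hβ1⟩

/-- If some terminal restriction `α_{[t,1]}` of a path `α` is well-targeted, then `α` is
well-targeted. -/
theorem isWellTargeted_of_restrict {X : Type*} [TopologicalSpace X] (α : C(I, X)) (t : I)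
    (h : IsWellTargeted (restrictCM α t)) : IsWellTargeted α := by
  set δ := restrictCM α t with hδdef
  rcases lt_or_eq_of_le t.2.2 with ht | ht
  · -- case t < 1
    refine isWellTargeted_of_map α δ h (restrictCM_one α t) (fun U hU hmem => ?_)
    have h1t : (1 : ℝ) - t ≠ 0 := by linarith
    set f : {β : C(I, X) // β 0 = δ 0} × I → X :=
      fun p => if (p.2 : ℝ) ≤ (t : ℝ) then α p.2 else p.1.1 (prI (((p.2 : ℝ) - t) / (1 - t)))
      with hfdef
    have hfc : Continuous f := by
      apply Continuous.if_le
      · exact α.continuous.comp continuous_snd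
      · refine continuous_eval.comp (Continuous.prodMk ?_ ?_)
        · exact continuous_subtype_val.comp continuous_fst
        · exact continuous_prI.comp (by fun_prop)
      · fun_prop
      · fun_prop
      · rintro ⟨β, s⟩ hst
        have hst' : (s : ℝ) = (t : ℝ) := hst
        show α s = β.1 (prI (((s : ℝ) - t) / (1 - t)))
        have h0 : prI (((s : ℝ) - t) / (1 - t)) = 0 := by
          rw [hst', sub_self, zero_div, prI_zero]
        rw [h0, β.2, hδdef, restrictCM_zero]
        congr 1
        exact Subtype.ext hst'
    set G : C({β : C(I, X) // β 0 = δ 0} × I, X) := ⟨f, hfc⟩ with hGdef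
    have hG0 : ∀ β : {β : C(I, X) // β 0 = δ 0}, G.curry β 0 = α 0 := by
      intro β
      show f (β, 0) = α 0
      simp only [hfdef]
      rw [if_pos (show ((0:I) : ℝ) ≤ (t : ℝ) by rw [I_coe_zero]; exact t.2.1)]
    refine ⟨⟨fun β => ⟨G.curry β, hG0 β⟩, Continuous.subtype_mk G.curry.continuous _⟩, ?_, ?_⟩
    · convert hmem using 2
      ext s
      show f (⟨δ, rfl⟩, s) = α s
      simp only [hfdef]
      split_ifs with hst
      · rfl
      · push_neg at hst
        rw [hδdef, restrictCM_apply]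
        congr 1
        have hmem' : ((s : ℝ) - t) / (1 - t) ∈ Set.Icc (0:ℝ) 1 := by
          constructor
          · apply div_nonneg <;> linarith
          · rw [div_le_one (by linarith)]
            linarith [s.2.2]
        apply prI_eq
        rw [prI_of_mem hmem', div_mul_cancel₀ _ h1t]
        ring
    · intro β
      show f (β, 1) = β.1 1
      simp only [hfdef]
      rw [if_neg (by push_neg; exact_mod_cast ht)]
      congr 1
      apply prI_eq
      rw [I_coe_one, div_self h1t]
  · -- case t = 1
    have ht1 : t = 1 := Subtype.ext ht
    subst ht1
    have hcδ : ∀ s, δ s = α 1 := by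
      intro s
      rw [hδdef, restrictCM_apply]
      congr 1
      exact prI_eq (by rw [I_coe_one]; ring)
    refine isWellTargeted_of_map α δ h (restrictCM_one α 1) (fun U hU hmem => ?_)
    -- Step 1: find u < 1 such that the reparametrization α ∘ φ_u lies in U
    set Φ : C(I × I, X) :=
      ⟨fun p => α (prI (min (max ((p.2 : I) : ℝ) (2 * p.2 - p.1)) 1)),
        α.continuous.comp (continuous_prI.comp (by fun_prop))⟩ with hΦdef
    have hΦ0 : ∀ u : I, Φ.curry u 0 = α 0 := by
      intro u
      show α (prI (min (max ((0:I) : ℝ) (2 * ((0:I) : ℝ) - u)) 1)) = α 0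
      congr 1
      apply prI_eq
      show (0 ⊔ (2 * 0 - (u:ℝ))) ⊓ 1 = (0:ℝ)
      rw [max_eq_left (by linarith [u.2.1]), min_eq_left zero_le_one]
    set e1 : C(I, {β : C(I, X) // β 0 = α 0}) :=
      ⟨fun u => ⟨Φ.curry u, hΦ0 u⟩, Continuous.subtype_mk Φ.curry.continuous _⟩ with he1def
    have he11 : e1 1 = ⟨α, rfl⟩ := by
      apply Subtype.ext
      ext s
      show α (prI (min (max ((s : I) : ℝ) (2 * s - ((1:I) : ℝ))) 1)) = α s
      congr 1
      apply prI_eq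
      rw [I_coe_one]
      rw [max_eq_left (by linarith [s.2.2]), min_eq_left s.2.2]
    have hS : IsOpen (e1 ⁻¹' U) := hU.preimage e1.continuous
    have hS1 : (1:I) ∈ e1 ⁻¹' U := by rw [Set.mem_preimage, he11]; exact hmem
    obtain ⟨ε, hε, hball⟩ := Metric.isOpen_iff.1 hS 1 hS1
    set u : I := ⟨max 0 (1 - ε / 2), le_max_left 0 _, max_le zero_le_one (by linarith)⟩
      with hudef
    have hu1 : (u : ℝ) < 1 := max_lt zero_lt_one (by linarith)
    have hmemu : e1 u ∈ U := by
      apply hball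
      rw [Metric.mem_ball, Subtype.dist_eq, Real.dist_eq]
      have h1 : 1 - ε / 2 ≤ (u : ℝ) := le_max_right 0 _
      rw [abs_lt]
      constructor <;> [linarith; linarith [hu1]]
    -- Step 2: splice α ∘ φ_u with β
    have h1u : (1:ℝ) - u ≠ 0 := by linarith
    set f : {β : C(I, X) // β 0 = δ 0} × I → X :=
      fun p => if ((p.2 : I) : ℝ) ≤ (1 + u) / 2 then
          α (prI (min (max ((p.2 : I) : ℝ) (2 * p.2 - u)) 1))
        else p.1.1 (prI ((2 * p.2 - 1 - u) / (1 - u))) with hfdef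
    have hfc : Continuous f := by
      apply Continuous.if_le
      · exact α.continuous.comp (continuous_prI.comp (by fun_prop))
      · refine continuous_eval.comp (Continuous.prodMk ?_ ?_)
        · exact continuous_subtype_val.comp continuous_fst
        · exact continuous_prI.comp (by fun_prop)
      · fun_prop
      · fun_prop
      · rintro ⟨β, s⟩ hst
        have hst' : (s : ℝ) = (1 + u) / 2 := hst
        show α (prI (min (max ((s : I) : ℝ) (2 * s - u)) 1)) = β.1 (prI ((2 * s - 1 - u) / (1 - u)))
        have hL : prI (min (max ((s : I) : ℝ) (2 * s - u)) 1) = 1 := by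
          apply prI_eq
          rw [I_coe_one, max_eq_right (by linarith [s.2.2]), min_eq_right (by linarith)]
        have hR : prI ((2 * (s:ℝ) - 1 - u) / (1 - u)) = 0 := by
          apply prI_eq
          rw [I_coe_zero, div_eq_zero_iff]
          left; linarith
        rw [hL, hR, β.2, hδdef, restrictCM_zero]
    set G : C({β : C(I, X) // β 0 = δ 0} × I, X) := ⟨f, hfc⟩ with hGdef
    have hG0 : ∀ β : {β : C(I, X) // β 0 = δ 0}, G.curry β 0 = α 0 := by
      intro β
      show f (β, 0) = α 0
      simp only [hfdef]
      rw [if_pos (show ((0:I) : ℝ) ≤ (1 + (u:ℝ)) / 2 by rw [I_coe_zero]; linarith [u.2.1])]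
      congr 1
      apply prI_eq
      show (0 ⊔ (2 * 0 - (u:ℝ))) ⊓ 1 = (0:ℝ)
      rw [max_eq_left (by linarith [u.2.1]), min_eq_left zero_le_one]
    refine ⟨⟨fun β => ⟨G.curry β, hG0 β⟩, Continuous.subtype_mk G.curry.continuous _⟩, ?_, ?_⟩
    · convert hmemu using 2
      ext s
      show f (⟨δ, rfl⟩, s) = Φ.curry u s
      have hΦus : Φ.curry u s = α (prI (min (max ((s : I) : ℝ) (2 * s - u)) 1)) := rfl
      simp only [hfdef]
      split_ifs with hst
      · rw [hΦus]
      · push_neg at hst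
        rw [hcδ, hΦus]
        congr 1
        apply Eq.symm
        apply prI_eq
        rw [I_coe_one, max_eq_right (by linarith [s.2.2]), min_eq_right (by linarith)]
    · intro β
      show f (β, 1) = β.1 1
      simp only [hfdef]
      rw [if_neg (by rw [I_coe_one]; push_neg; linarith)]
      congr 1
      apply prI_eq
      show (2 * ((1:I):ℝ) - 1 - (u:ℝ)) / (1 - (u:ℝ)) = (1:ℝ)
      rw [show 2 * ((1:I):ℝ) - 1 - (u:ℝ) = 1 - u by rw [I_coe_one]; ring, div_self h1u]
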